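/- The set of unit triangular symplectic matrices, i.e., matrices of the form [[I,S],[0,I]] or [[I,0],[S,I]] with S ∈ ℝ^{d×d} symmetric, generates the group of real 2d×2d symplectic matrices. -/

import Mathlib

open Matrix

def Jmat (d : ℕ) : Matrix (Fin d ⊕ Fin d) (Fin d ⊕ Fin d) ℝ :=
  Matrix.fromBlocks 0 1 (-1) 0

def IsSymplectic {d : ℕ} (H : Matrix (Fin d ⊕ Fin d) (Fin d ⊕ Fin d) ℝ) : Prop :=
  Hᵀ * Jmat d * H = Jmat d

def IsUnitTriangular {d : ℕ} (M : Matrix (Fin d ⊕ Fin d) (Fin d ⊕ Fin d) ℝ) : Prop :=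
  ∃ S : Matrix (Fin d) (Fin d) ℝ, Sᵀ = S ∧
    (M = Matrix.fromBlocks 1 S 0 1 ∨ M = Matrix.fromBlocks 1 0 S 1)

namespace Stmt15


variable {d : ℕ}

abbrev Mat (d : ℕ) := Matrix (Fin d ⊕ Fin d) (Fin d ⊕ Fin d) ℝ

def Gp (H : Mat d) : Prop :=
  ∃ L : List (Mat d), (∀ M ∈ L, IsUnitTriangular M) ∧ L.prod = H

lemma Gp.mul {H K : Mat d} (hH : Gp H) (hK : Gp K) : Gp (H * K) := by
  obtain ⟨L1, h1, e1⟩ := hH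
  obtain ⟨L2, h2, e2⟩ := hK
  exact ⟨L1 ++ L2, by
    intro M hM
    rcases List.mem_append.1 hM with h | h
    · exact h1 M h
    · exact h2 M h, by rw [List.prod_append, e1, e2]⟩

lemma Gp_N (S : Matrix (Fin d) (Fin d) ℝ) (hS : Sᵀ = S) :
    Gp (fromBlocks 1 S 0 1) :=
  ⟨[fromBlocks 1 S 0 1], by rintro M hM; simp at hM; subst hM; exact ⟨S, hS, Or.inl rfl⟩,
    by simp⟩

lemma Gp_M (S : Matrix (Fin d) (Fin d) ℝ) (hS : Sᵀ = S) :
    Gp (fromBlocks 1 0 S 1) :=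
  ⟨[fromBlocks 1 0 S 1], by rintro M hM; simp at hM; subst hM; exact ⟨S, hS, Or.inr rfl⟩,
    by simp⟩

lemma Gp_J : Gp (Jmat d) := by
  have : (Jmat d) = fromBlocks 1 (1:Matrix (Fin d) (Fin d) ℝ) 0 1 *
      fromBlocks 1 0 (-1) 1 * fromBlocks 1 1 0 1 := by
    simp [Jmat, fromBlocks_multiply]
  rw [this]
  exact (Gp.mul (Gp.mul (Gp_N 1 (by simp)) (Gp_M (-1) (by simp))) (Gp_N 1 (by simp)))

lemma Gp_Jinv : Gp (fromBlocks 0 (-1) 1 0 : Mat d) := by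
  have : (fromBlocks 0 (-1) 1 0 : Mat d) = fromBlocks 1 (-1:Matrix (Fin d) (Fin d) ℝ) 0 1 *
      fromBlocks 1 0 1 1 * fromBlocks 1 (-1) 0 1 := by
    simp [fromBlocks_multiply]
  rw [this]
  exact (Gp.mul (Gp.mul (Gp_N (-1) (by simp)) (Gp_M 1 (by simp))) (Gp_N (-1) (by simp)))




def SymGen (A : Matrix (Fin d) (Fin d) ℝ) : Prop :=
  ∃ L : List (Matrix (Fin d) (Fin d) ℝ),
    (∀ M ∈ L, Mᵀ = M ∧ IsUnit M.det) ∧ L.prod = A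

lemma SymGen.mul {A B : Matrix (Fin d) (Fin d) ℝ} (hA : SymGen A) (hB : SymGen B) :
    SymGen (A * B) := by
  obtain ⟨L1, h1, e1⟩ := hA
  obtain ⟨L2, h2, e2⟩ := hB
  exact ⟨L1 ++ L2, by
    intro M hM
    rcases List.mem_append.1 hM with h | h
    · exact h1 M h
    · exact h2 M h, by rw [List.prod_append, e1, e2]⟩

lemma SymGen_single {M : Matrix (Fin d) (Fin d) ℝ} (hs : Mᵀ = M) (hu : IsUnit M.det) :
    SymGen M :=
  ⟨[M], by rintro N hN; simp at hN; subst hN; exact ⟨hs, hu⟩, by simp⟩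

lemma transpose_sbm (i j : Fin d) (a : ℝ) :
    (Matrix.single i j a)ᵀ = Matrix.single j i a := by
  ext a' b'
  simp [Matrix.single, and_comm]

lemma symGen_transvection (i j : Fin d) (hij : i ≠ j) (c : ℝ) :
    SymGen (transvection i j c) := by
  set P : Matrix (Fin d) (Fin d) ℝ :=
    1 - Matrix.single i i 1 - Matrix.single j j 1 + Matrix.single i j 1 + Matrix.single j i 1
    with hP
  set Q : Matrix (Fin d) (Fin d) ℝ := P + Matrix.single j j c with hQ
  have hPsym : Pᵀ = P := by
    simp [hP, transpose_sbm]
    abel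
  have hQsym : Qᵀ = Q := by
    simp [hQ, transpose_sbm, hPsym]
  have mne : ∀ (a b c e : Fin d) (x y : ℝ), b ≠ c →
      Matrix.single a b x * Matrix.single c e y = 0 :=
    fun a b c e x y h => Matrix.single_mul_single_of_ne (c := x) a b c h y
  have hPQ : P * Q = transvection i j c := by
    simp only [hQ, hP, transvection, Matrix.mul_add, Matrix.add_mul, Matrix.sub_mul,
      Matrix.mul_sub, Matrix.one_mul, Matrix.mul_one,
      Matrix.single_mul_single_same, mul_one, one_mul]
    simp only [mne _ _ _ _ _ _ hij, mne _ _ _ _ _ _ hij.symm]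
    abel
  have hPP : P * P = 1 := by
    simp only [hP, Matrix.mul_add, Matrix.add_mul, Matrix.sub_mul, Matrix.mul_sub,
      Matrix.one_mul, Matrix.mul_one,
      Matrix.single_mul_single_same, mul_one]
    simp only [mne _ _ _ _ _ _ hij, mne _ _ _ _ _ _ hij.symm]
    abel
  have hPu : IsUnit P.det := by
    apply IsUnit.of_mul_eq_one
    rw [← det_mul, hPP, det_one]
  have hQu : IsUnit Q.det := by
    have : Q = P * transvection i j c := by
      rw [← hPQ, ← Matrix.mul_assoc, hPP, Matrix.one_mul]
    rw [this, det_mul, det_transvection_of_ne _ _ hij, mul_one]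
    exact hPu
  rw [← hPQ]
  exact (SymGen_single hPsym hPu).mul (SymGen_single hQsym hQu)

lemma symGen_of_isUnit (A : Matrix (Fin d) (Fin d) ℝ) (h : IsUnit A.det) : SymGen A := by
  obtain ⟨L, L', D, hA⟩ := Pivot.exists_list_transvec_mul_diagonal_mul_list_transvec A
  have hlist : ∀ L : List (TransvectionStruct (Fin d) ℝ),
      SymGen (L.map TransvectionStruct.toMatrix).prod := by
    intro L
    induction L with
    | nil => exact ⟨[], by simp, by simp⟩
    | cons t L ih =>
        simp only [List.map_cons, List.prod_cons]
        exact (symGen_transvection t.i t.j t.hij t.c).mul ih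
  have hDu : IsUnit (diagonal D).det := by
    have := congrArg det hA
    rw [det_mul, det_mul, TransvectionStruct.det_toMatrix_prod,
      TransvectionStruct.det_toMatrix_prod, one_mul, mul_one] at this
    rwa [← this]
  rw [hA]
  exact ((hlist L).mul (SymGen_single (diagonal_transpose D) hDu)).mul (hlist L')




lemma exists_symm_isUnit (A C : Matrix (Fin d) (Fin d) ℝ)
    (hsym : Aᵀ * C = Cᵀ * A)
    (hrank : ∀ x : Fin d → ℝ, A *ᵥ x = 0 → C *ᵥ x = 0 → x = 0) :
    ∃ S : Matrix (Fin d) (Fin d) ℝ, Sᵀ = S ∧ IsUnit (A + S * C).det := by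
  classical
  set W : Submodule ℝ (EuclideanSpace ℝ (Fin d)) :=
    (LinearMap.ker (Matrix.toEuclideanLin A)).map (Matrix.toEuclideanLin C) with hW
  set p : EuclideanSpace ℝ (Fin d) →ₗ[ℝ] EuclideanSpace ℝ (Fin d) :=
    (W.subtypeL ∘L W.orthogonalProjectionOnto).toLinearMap with hp
  set S : Matrix (Fin d) (Fin d) ℝ := Matrix.toEuclideanLin.symm p with hS
  have hSp : Matrix.toEuclideanLin S = p := Matrix.toEuclideanLin.apply_symm_apply p
  have hmul : ∀ (M : Matrix (Fin d) (Fin d) ℝ) (v : Fin d → ℝ),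
      Matrix.toEuclideanLin M (WithLp.toLp 2 v) = WithLp.toLp 2 (M *ᵥ v) := fun _ _ => rfl
  have hSsym : Sᵀ = S := by
    have h1 : S.IsHermitian := by
      rw [Matrix.isHermitian_iff_isSymmetric, hSp]
      exact Submodule.starProjection_isSymmetric W
    rwa [Matrix.IsHermitian, Matrix.conjTranspose_eq_transpose_of_trivial] at h1
  have dothelp : ∀ (M N : Matrix (Fin d) (Fin d) ℝ) (x y : Fin d → ℝ),
      (M *ᵥ x) ⬝ᵥ (N *ᵥ y) = x ⬝ᵥ ((Mᵀ * N) *ᵥ y) := by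
    intro M N x y
    rw [← Matrix.mulVec_mulVec, Matrix.dotProduct_mulVec x, Matrix.vecMul_transpose]
  refine ⟨S, hSsym, ?_⟩
  rw [isUnit_iff_ne_zero]
  intro hdet
  obtain ⟨v, hv0, hv⟩ := (Matrix.exists_mulVec_eq_zero_iff).2 hdet
  have hAv : A *ᵥ v = -(S *ᵥ (C *ᵥ v)) := by
    rw [Matrix.add_mulVec, ← Matrix.mulVec_mulVec] at hv
    exact eq_neg_of_add_eq_zero_left hv
  have hpmem : WithLp.toLp 2 (S *ᵥ (C *ᵥ v)) ∈ W := by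
    rw [← hmul, hSp, hp]
    exact SetLike.coe_mem _
  have hAvW : WithLp.toLp 2 (A *ᵥ v) ∈ W := by rw [hAv, WithLp.toLp_neg]; exact W.neg_mem hpmem
  -- orthogonality of range A and W
  have horth : ∀ w ∈ W, (A *ᵥ v) ⬝ᵥ (WithLp.ofLp w) = 0 := by
    rintro w ⟨y, hy, rfl⟩
    have hy' : A *ᵥ WithLp.ofLp y = 0 := congrArg WithLp.ofLp (LinearMap.mem_ker.1 hy)
    rw [show WithLp.ofLp (Matrix.toEuclideanLin C y) = C *ᵥ WithLp.ofLp y from rfl,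
      dothelp, hsym, ← dothelp, hy', dotProduct_zero]
  have hAv0 : A *ᵥ v = 0 := by
    have := horth _ hAvW
    rwa [WithLp.ofLp_toLp, dotProduct_self_eq_zero] at this
  have hCvW : WithLp.toLp 2 (C *ᵥ v) ∈ W := by
    refine Submodule.mem_map.2 ⟨WithLp.toLp 2 v, ?_, hmul C v⟩
    rw [LinearMap.mem_ker, hmul, hAv0]
    rfl
  have hproj : S *ᵥ (C *ᵥ v) = C *ᵥ v := by
    refine congrArg WithLp.ofLp (?_ : WithLp.toLp 2 (S *ᵥ (C *ᵥ v)) = WithLp.toLp 2 (C *ᵥ v))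
    rw [← hmul, hSp, hp]
    exact (Submodule.starProjection_eq_self_iff (K := W)).2 hCvW
  have hCv0 : C *ᵥ v = 0 := by
    have : (0 : Fin d → ℝ) = -(C *ᵥ v) := by rw [← hAv0, hAv, hproj]
    simpa [neg_eq_iff_eq_neg] using this.symm
  exact hv0 (hrank v hAv0 hCv0)


lemma Gp_one : Gp (1 : Mat d) := ⟨[], by simp, rfl⟩

lemma Gp_D_sym (M : Matrix (Fin d) (Fin d) ℝ) (hs : Mᵀ = M) (hu : IsUnit M.det) :
    Gp (fromBlocks M 0 0 M⁻¹) := by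
  have h1 : M * M⁻¹ = 1 := mul_nonsing_inv M hu
  have h2 : M⁻¹ * M = 1 := nonsing_inv_mul M hu
  have hinv : (M⁻¹)ᵀ = M⁻¹ := by rw [Matrix.transpose_nonsing_inv, hs]
  have key : fromBlocks M 0 0 M⁻¹ =
      fromBlocks 1 M 0 1 * fromBlocks 1 0 (-M⁻¹) 1 * fromBlocks 1 M 0 1 *
        fromBlocks 0 (-1) 1 0 := by
    rw [fromBlocks_multiply, fromBlocks_multiply, fromBlocks_multiply]
    simp [h1, h2, Matrix.mul_neg, Matrix.neg_mul]
  rw [key]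
  exact ((((Gp_N M hs).mul (Gp_M (-M⁻¹) (by rw [transpose_neg, hinv]))).mul
    (Gp_N M hs)).mul Gp_Jinv)

lemma Gp_D (A : Matrix (Fin d) (Fin d) ℝ) (hu : IsUnit A.det) :
    Gp (fromBlocks A 0 0 (A⁻¹)ᵀ) := by
  obtain ⟨L, hL, hprod⟩ := symGen_of_isUnit A hu
  subst hprod
  clear hu
  induction L with
  | nil => simpa [Matrix.fromBlocks_one] using (Gp_one (d := d))
  | cons M L ih =>
      have hM := hL M List.mem_cons_self
      have hL' : ∀ N ∈ L, Nᵀ = N ∧ IsUnit N.det := fun N hN => hL N (List.mem_cons_of_mem _ hN)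
      have key : fromBlocks (M * L.prod) 0 0 (((M * L.prod)⁻¹)ᵀ)
          = fromBlocks M 0 0 M⁻¹ * fromBlocks L.prod 0 0 ((L.prod⁻¹)ᵀ) := by
        rw [Matrix.mul_inv_rev, Matrix.transpose_mul, fromBlocks_multiply]
        simp [Matrix.transpose_nonsing_inv, hM.1]
      simp only [List.prod_cons, key]
      exact (Gp_D_sym M hM.1 hM.2).mul (ih hL')

lemma sympl_rel {A B C D : Matrix (Fin d) (Fin d) ℝ}
    (h : IsSymplectic (fromBlocks A B C D)) :
    Aᵀ * C = Cᵀ * A ∧ Aᵀ * D - Cᵀ * B = 1 ∧ Bᵀ * D = Dᵀ * B := by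
  have h' := h
  unfold IsSymplectic Jmat at h'
  rw [fromBlocks_transpose, fromBlocks_multiply, fromBlocks_multiply] at h'
  have h11 := congrArg Matrix.toBlocks₁₁ h'
  have h12 := congrArg Matrix.toBlocks₁₂ h'
  have h22 := congrArg Matrix.toBlocks₂₂ h'
  simp only [Matrix.toBlocks_fromBlocks₁₁, Matrix.toBlocks_fromBlocks₁₂,
    Matrix.toBlocks_fromBlocks₂₂, Matrix.mul_zero, Matrix.zero_mul, Matrix.mul_one,
    Matrix.mul_neg, Matrix.neg_mul, zero_add, add_zero,
    Matrix.one_mul, neg_add_eq_sub] at h11 h12 h22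
  exact ⟨sub_eq_zero.mp h11, h12, sub_eq_zero.mp h22⟩

lemma isSymplectic_mul {G H : Mat d} (hG : IsSymplectic G) (hH : IsSymplectic H) :
    IsSymplectic (G * H) := by
  unfold IsSymplectic at *
  rw [Matrix.transpose_mul]
  have e : Hᵀ * Gᵀ * Jmat d * (G * H) = Hᵀ * (Gᵀ * Jmat d * G) * H := by
    simp only [Matrix.mul_assoc]
  rw [e, hG]
  exact hH

lemma isSymplectic_N (S : Matrix (Fin d) (Fin d) ℝ) (hS : Sᵀ = S) :
    IsSymplectic (fromBlocks 1 S 0 1) := by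
  unfold IsSymplectic Jmat
  rw [fromBlocks_transpose, fromBlocks_multiply, fromBlocks_multiply]
  simp [hS]

lemma isSymplectic_M (S : Matrix (Fin d) (Fin d) ℝ) (hS : Sᵀ = S) :
    IsSymplectic (fromBlocks 1 0 S 1) := by
  unfold IsSymplectic Jmat
  rw [fromBlocks_transpose, fromBlocks_multiply, fromBlocks_multiply]
  simp [hS]

lemma isUnit_det_of_symplectic {H : Mat d} (h : IsSymplectic H) : IsUnit H.det := by
  have hJ : (Jmat d) * (Jmat d) = -1 := by
    unfold Jmat
    rw [fromBlocks_multiply]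
    simp [← Matrix.fromBlocks_one, fromBlocks_neg]
  have hdJ : (Jmat d).det ≠ 0 := by
    intro h0
    have := congrArg Matrix.det hJ
    rw [Matrix.det_mul, h0, mul_zero] at this
    have h1 : ((-1 : Mat d)).det = 1 := by
      have e : ((-1 : Mat d)) = (-1 : ℝ) • (1 : Mat d) := by simp
      rw [e, Matrix.det_smul, Matrix.det_one, Fintype.card_sum, Fintype.card_fin]
      simp [pow_add, ← mul_pow]
    rw [h1] at this
    exact one_ne_zero this.symm
  have := congrArg Matrix.det h
  rw [Matrix.det_mul, Matrix.det_mul, Matrix.det_transpose] at this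
  rw [isUnit_iff_ne_zero]
  intro h0
  rw [h0, zero_mul, zero_mul] at this
  exact hdJ this.symm

end Stmt15

open Stmt15 in
theorem stmt15 (d : ℕ) (H : Matrix (Fin d ⊕ Fin d) (Fin d ⊕ Fin d) ℝ)
    (h : IsSymplectic H) :
    ∃ L : List (Matrix (Fin d ⊕ Fin d) (Fin d ⊕ Fin d) ℝ),
      (∀ M ∈ L, IsUnitTriangular M) ∧ L.prod = H := by
  classical
  set A := H.toBlocks₁₁ with hA
  set B := H.toBlocks₁₂ with hB
  set C := H.toBlocks₂₁ with hC
  set D := H.toBlocks₂₂ with hD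
  have hHb : H = fromBlocks A B C D := (fromBlocks_toBlocks H).symm
  have hdet : IsUnit H.det := isUnit_det_of_symplectic h
  have hrank : ∀ x : Fin d → ℝ, A *ᵥ x = 0 → C *ᵥ x = 0 → x = 0 := by
    intro x hAx hCx
    by_contra hx
    have hvz : H *ᵥ (Sum.elim x 0) = 0 := by
      rw [hHb, fromBlocks_mulVec]
      funext i
      cases i <;> simp [hAx, hCx]
    have hvne : (Sum.elim x 0 : Fin d ⊕ Fin d → ℝ) ≠ 0 := by
      intro h0
      apply hx
      funext i
      exact congrFun h0 (Sum.inl i)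
    have hz : H.det = 0 := Matrix.exists_mulVec_eq_zero_iff.1 ⟨_, hvne, hvz⟩
    rw [hz] at hdet
    simp at hdet
  have hrel := sympl_rel (hHb ▸ h)
  obtain ⟨S₁, hS₁, hA₁u⟩ := exists_symm_isUnit A C hrel.1 hrank
  set A₁ := A + S₁ * C with hA₁
  set B₁ := B + S₁ * D with hB₁
  have hA₁tu : IsUnit (A₁ᵀ).det := by rwa [Matrix.det_transpose]
  have inva : A₁ * A₁⁻¹ = 1 := mul_nonsing_inv _ hA₁u
  have invb : A₁⁻¹ * A₁ = 1 := nonsing_inv_mul _ hA₁u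
  have invc : A₁ᵀ * (A₁ᵀ)⁻¹ = 1 := mul_nonsing_inv _ hA₁tu
  have invd : (A₁ᵀ)⁻¹ * A₁ᵀ = 1 := nonsing_inv_mul _ hA₁tu
  have e₁ : fromBlocks 1 S₁ 0 1 * H = fromBlocks A₁ B₁ C D := by
    rw [hHb, fromBlocks_multiply]
    simp [hA₁, hB₁]
  have hH₁s : IsSymplectic (fromBlocks A₁ B₁ C D) := by
    rw [← e₁]
    exact isSymplectic_mul (isSymplectic_N S₁ hS₁) h
  have hrel₁ := sympl_rel hH₁s
  set S₂ := -(C * A₁⁻¹) with hS₂def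
  have hCAinv : (A₁ᵀ)⁻¹ * Cᵀ = C * A₁⁻¹ := by
    have e : A₁ᵀ * (C * A₁⁻¹) = Cᵀ := by
      rw [← Matrix.mul_assoc, hrel₁.1, Matrix.mul_assoc, inva, Matrix.mul_one]
    rw [← e, ← Matrix.mul_assoc, invd, Matrix.one_mul]
  have hS₂ : S₂ᵀ = S₂ := by
    rw [hS₂def, Matrix.transpose_neg, Matrix.transpose_mul, Matrix.transpose_nonsing_inv,
      hCAinv]
  set D₂ := S₂ * B₁ + D with hD₂def
  have e₂ : fromBlocks 1 0 S₂ 1 * fromBlocks A₁ B₁ C D = fromBlocks A₁ B₁ 0 D₂ := by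
    rw [fromBlocks_multiply]
    have h21 : S₂ * A₁ + C = 0 := by
      rw [hS₂def, Matrix.neg_mul, Matrix.mul_assoc, invb, Matrix.mul_one, neg_add_cancel]
    simp [h21, hD₂def]
  have hH₂s : IsSymplectic (fromBlocks A₁ B₁ 0 D₂) := by
    rw [← e₂]
    exact isSymplectic_mul (isSymplectic_M S₂ hS₂) hH₁s
  have hrel₂ := sympl_rel hH₂s
  have hD₂ : D₂ = (A₁ᵀ)⁻¹ := by
    have h1 : A₁ᵀ * D₂ = 1 := by
      have := hrel₂.2.1
      simpa using this
    exact (Matrix.inv_eq_right_inv h1).symm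
  have cancel1 : ∀ X : Matrix (Fin d) (Fin d) ℝ, A₁ * (A₁⁻¹ * X) = X := by
    intro X; rw [← Matrix.mul_assoc, inva, Matrix.one_mul]
  have hBA : A₁ * B₁ᵀ = B₁ * A₁ᵀ := by
    have e := hrel₂.2.2
    rw [hD₂, Matrix.transpose_nonsing_inv, Matrix.transpose_transpose] at e
    have := congrArg (fun X => A₁ * X * A₁ᵀ) e
    simpa [Matrix.mul_assoc, invd, cancel1, Matrix.mul_one] using this
  set S₃ := -(B₁ * A₁ᵀ) with hS₃def
  have hS₃ : S₃ᵀ = S₃ := by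
    rw [hS₃def, Matrix.transpose_neg, Matrix.transpose_mul, Matrix.transpose_transpose, hBA]
  have e₃ : fromBlocks 1 S₃ 0 1 * fromBlocks A₁ B₁ 0 D₂ = fromBlocks A₁ 0 0 D₂ := by
    rw [fromBlocks_multiply]
    have h12 : B₁ + S₃ * D₂ = 0 := by
      rw [hS₃def, hD₂, Matrix.neg_mul, Matrix.mul_assoc, invc, Matrix.mul_one, add_neg_cancel]
    simp [h12]
  have hGp₃ : Gp (fromBlocks A₁ 0 0 D₂) := by
    have : D₂ = (A₁⁻¹)ᵀ := by rw [hD₂, Matrix.transpose_nonsing_inv]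
    rw [this]
    exact Gp_D A₁ hA₁u
  have f₃ : fromBlocks 1 (-S₃) 0 1 * fromBlocks A₁ 0 0 D₂ = fromBlocks A₁ B₁ 0 D₂ := by
    rw [← e₃, ← Matrix.mul_assoc, fromBlocks_multiply]
    simp [Matrix.fromBlocks_one]
  have f₂ : fromBlocks 1 0 (-S₂) 1 * fromBlocks A₁ B₁ 0 D₂ = fromBlocks A₁ B₁ C D := by
    rw [← e₂, ← Matrix.mul_assoc, fromBlocks_multiply]
    simp [Matrix.fromBlocks_one]
  have f₁ : fromBlocks 1 (-S₁) 0 1 * fromBlocks A₁ B₁ C D = H := by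
    rw [← e₁, ← Matrix.mul_assoc, fromBlocks_multiply]
    simp [Matrix.fromBlocks_one]
  have : Gp H := by
    rw [← f₁, ← f₂, ← f₃]
    exact (Gp_N (-S₁) (by rw [Matrix.transpose_neg, hS₁])).mul
      ((Gp_M (-S₂) (by rw [Matrix.transpose_neg, hS₂])).mul
        ((Gp_N (-S₃) (by rw [Matrix.transpose_neg, hS₃])).mul hGp₃))
  exact this
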